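/- Let G be a Hausdorff topological group whose underlying space is extremally disconnected. Then G contains an open (and hence also closed) subgroup H such that h * h = 1 for every h ∈ H; that is, every extremally disconnected topological group contains an open Boolean subgroup. -/

import Mathlib

open scoped Pointwise
open Set

/-- In an extremally disconnected Hausdorff topological group, the set of
square roots of `1` is a neighborhood of `1`. -/
theorem aux_sq_eq_one_nhds {G : Type*} [Group G] [TopologicalSpace G] [IsTopologicalGroup G]
    [T2Space G] [ExtremallyDisconnected G] : {x : G | x * x = 1} ∈ nhds (1 : G) := by
  have hBclosed : IsClosed {x : G | x * x = 1} :=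
    isClosed_eq (continuous_id.mul continuous_id) continuous_const
  set A : Set G := {x : G | x * x = 1}ᶜ with hA
  have hAopen : IsOpen A := hBclosed.isOpen_compl
  -- key separation gadget: every point of `A` has an open nbhd `W ⊆ A` with `W ∩ W⁻¹ = ∅`
  have hW : ∀ x ∈ A, ∃ W : Set G, IsOpen W ∧ x ∈ W ∧ W ⊆ A ∧ W ∩ W⁻¹ = ∅ := by
    intro x hx
    have hxne : x ≠ x⁻¹ := by
      intro h
      apply hx
      show x * x = 1
      nth_rewrite 2 [h]
      exact mul_inv_cancel x
    obtain ⟨U, V, hUo, hVo, hxU, hxV, hUV⟩ := t2_separation hxne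
    refine ⟨A ∩ U ∩ V⁻¹, (hAopen.inter hUo).inter hVo.inv, ⟨⟨hx, hxU⟩, by
      simpa using hxV⟩, fun y hy => hy.1.1, ?_⟩
    ext y
    simp only [mem_inter_iff, mem_inv, mem_empty_iff_false, iff_false]
    rintro ⟨⟨⟨-, hyU⟩, -⟩, ⟨-, -⟩, hyV⟩
    exact hUV.le_bot ⟨hyU, by simpa using hyV⟩
  suffices h1 : (1 : G) ∉ closure A by
    have : (closure A)ᶜ ∈ nhds (1 : G) :=
      (isClosed_closure.isOpen_compl).mem_nhds h1
    exact Filter.mem_of_superset this (by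
      intro y hy
      by_contra hyc
      exact hy (subset_closure hyc))
  intro hcl
  -- Zorn: a maximal open `M ⊆ A` with `M ∩ M⁻¹ = ∅`
  set S : Set (Set G) := {O | IsOpen O ∧ O ⊆ A ∧ O ∩ O⁻¹ = ∅} with hS
  obtain ⟨M, -, hM⟩ := zorn_subset_nonempty S
    (fun c hcS hchain _ => by
      refine ⟨⋃₀ c, ⟨isOpen_sUnion fun O hO => (hcS hO).1,
        fun y hy => ?_, ?_⟩, fun s hs => subset_sUnion_of_mem hs⟩
      · obtain ⟨O, hO, hyO⟩ := hy
        exact (hcS hO).2.1 hyO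
      · ext y
        simp only [mem_inter_iff, mem_inv, mem_sUnion, mem_empty_iff_false, iff_false]
        rintro ⟨⟨O₁, hO₁, hy₁⟩, O₂, hO₂, hy₂⟩
        rcases hchain.total hO₁ hO₂ with h | h
        · exact absurd (by exact ⟨h hy₁, hy₂⟩ : y ∈ O₂ ∩ O₂⁻¹) (by
            rw [(hcS hO₂).2.2]; exact notMem_empty y)
        · exact absurd (by exact ⟨hy₁, h hy₂⟩ : y ∈ O₁ ∩ O₁⁻¹) (by
            rw [(hcS hO₁).2.2]; exact notMem_empty y))
    ∅ ⟨isOpen_empty, empty_subset _, by simp⟩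
  obtain ⟨hMopen, hMA, hMdisj⟩ := hM.prop
  -- `1 ∈ closure M`
  have h1M : (1 : G) ∈ closure M := by
    by_contra h1M
    obtain ⟨N₀, hN₀M, hN₀o, h1N₀⟩ := mem_nhds_iff.1 ((isClosed_closure.isOpen_compl).mem_nhds
      (by simpa using h1M))
    have hN₀M' : N₀ ∩ M = ∅ := by
      ext y; simp only [mem_inter_iff, mem_empty_iff_false, iff_false]
      rintro ⟨hy1, hy2⟩
      exact hN₀M hy1 (subset_closure hy2)
    set N : Set G := N₀ ∩ N₀⁻¹ with hN
    have hNo : IsOpen N := hN₀o.inter hN₀o.inv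
    have h1N : (1 : G) ∈ N := ⟨h1N₀, by simpa using h1N₀⟩
    have hNM : ∀ y ∈ N, y ∉ M := fun y hy hyM => by
      have : y ∈ N₀ ∩ M := ⟨hy.1, hyM⟩
      rw [hN₀M'] at this; exact this
    have hNinvM : ∀ y ∈ N, y⁻¹ ∉ M := fun y hy hyM => by
      have : y⁻¹ ∈ N₀ ∩ M := ⟨hy.2, hyM⟩
      rw [hN₀M'] at this; exact this
    -- pick a point of `A` inside `N`
    obtain ⟨x, hxN, hxA⟩ := mem_closure_iff.1 hcl N hNo h1N
    obtain ⟨W₀, hW₀o, hxW₀, hW₀A, hW₀disj⟩ := hW x hxA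
    set W : Set G := W₀ ∩ N with hWdef
    have hxW : x ∈ W := ⟨hxW₀, hxN⟩
    have hnew : M ∪ W ∈ S := by
      refine ⟨hMopen.union (hW₀o.inter hNo), union_subset hMA fun y hy => hW₀A hy.1, ?_⟩
      ext y
      simp only [mem_inter_iff, mem_inv, mem_union, mem_empty_iff_false, iff_false]
      rintro ⟨hy1, hy2⟩
      rcases hy1 with hyM | hyW
      · rcases hy2 with hyM' | hyW'
        · have : y ∈ M ∩ M⁻¹ := ⟨hyM, Set.mem_inv.2 hyM'⟩
          rw [hMdisj] at this; exact this
        · exact hNinvM _ hyW'.2 (by simpa using hyM)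
      · rcases hy2 with hyM' | hyW'
        · exact hNinvM _ hyW.2 hyM'
        · have : y ∈ W₀ ∩ W₀⁻¹ := ⟨hyW.1, Set.mem_inv.2 hyW'.1⟩
          rw [hW₀disj] at this; exact this
    have : M ∪ W ⊆ M := hM.2 hnew subset_union_left
    exact hNM x hxN (this (Or.inr hxW))
  -- extremal disconnectedness: disjoint open sets have disjoint closures
  have hMinvOpen : IsOpen (M⁻¹ : Set G) := hMopen.inv
  have hdisj : Disjoint M (M⁻¹ : Set G) := by
    rw [disjoint_iff_inter_eq_empty]; exact hMdisj
  have hclopen : IsOpen (closure M) := ExtremallyDisconnected.open_closure M hMopen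
  have hd2 : Disjoint (closure M) (M⁻¹ : Set G) := hdisj.closure_left hMinvOpen
  have hd3 : Disjoint (closure M) (closure (M⁻¹ : Set G)) := hd2.closure_right hclopen
  have h1Minv : (1 : G) ∈ closure (M⁻¹ : Set G) := by
    rw [← inv_closure]
    simpa using h1M
  exact hd3.le_bot ⟨h1M, h1Minv⟩

/-- Every Hausdorff extremally disconnected topological group contains an open
(and hence also closed) Boolean subgroup. -/
theorem stmt0 {G : Type*} [Group G] [TopologicalSpace G] [IsTopologicalGroup G]
    [T2Space G] [ExtremallyDisconnected G] :
    ∃ H : Subgroup G, IsOpen (H : Set G) ∧ IsClosed (H : Set G) ∧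
      ∀ h ∈ H, h * h = 1 := by
  obtain ⟨V₀, hV₀o, h1V₀, hV₀sq⟩ := exists_open_nhds_one_mul_subset (aux_sq_eq_one_nhds (G := G))
  set V : Set G := V₀ ∩ V₀⁻¹ with hV
  have hVo : IsOpen V := hV₀o.inter hV₀o.inv
  have h1V : (1 : G) ∈ V := ⟨h1V₀, by simpa using h1V₀⟩
  have hVsq : ∀ x ∈ V, ∀ y ∈ V, (x * y) * (x * y) = 1 := fun x hx y hy =>
    hV₀sq (Set.mul_mem_mul hx.1 hy.1)
  have hVone : ∀ x ∈ V, x * x = 1 := fun x hx => by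
    have := hVsq x hx 1 h1V
    simpa using this
  have hVcomm : ∀ x ∈ V, ∀ y ∈ V, Commute x y := by
    intro x hx y hy
    have hxy : (x * y) * (x * y) = 1 := hVsq x hx y hy
    have h1 : x * y = (x * y)⁻¹ := eq_inv_of_mul_eq_one_left hxy
    have h2 : (x * y)⁻¹ = y⁻¹ * x⁻¹ := mul_inv_rev x y
    have hxi : x⁻¹ = x := inv_eq_of_mul_eq_one_left (hVone x hx)
    have hyi : y⁻¹ = y := inv_eq_of_mul_eq_one_left (hVone y hy)
    show x * y = y * x
    rw [h1, h2, hxi, hyi]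
  refine ⟨Subgroup.closure V, ?_, ?_, ?_⟩
  · exact Subgroup.isOpen_of_mem_nhds (Subgroup.closure V) (Filter.mem_of_superset (hVo.mem_nhds h1V)
      Subgroup.subset_closure)
  · exact Subgroup.isClosed_of_isOpen _ (Subgroup.isOpen_of_mem_nhds (Subgroup.closure V)
      (Filter.mem_of_superset (hVo.mem_nhds h1V) Subgroup.subset_closure))
  · -- Booleanness
    have hcomm1 : ∀ h ∈ Subgroup.closure V, ∀ v ∈ V, Commute v h := by
      intro h hh
      induction hh using Subgroup.closure_induction with
      | mem x hx => exact fun v hv => hVcomm v hv x hx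
      | one => exact fun v _ => Commute.one_right v
      | mul x y hx hy px py => exact fun v hv => (px v hv).mul_right (py v hv)
      | inv x hx px => exact fun v hv => (px v hv).inv_right
    have hcomm : ∀ g ∈ Subgroup.closure V, ∀ h ∈ Subgroup.closure V, Commute g h := by
      intro g hg h hh
      induction hg using Subgroup.closure_induction with
      | mem x hx => exact hcomm1 h hh x hx
      | one => exact Commute.one_left h
      | mul x y hx hy px py => exact px.mul_left py
      | inv x hx px => exact px.inv_left
    intro h hh
    induction hh using Subgroup.closure_induction with
    | mem x hx => exact hVone x hx
    | one => simp
    | mul x y hx hy px py =>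
      have hxy : Commute x y := hcomm x hx y hy
      calc (x * y) * (x * y) = x * (y * x) * y := by group
        _ = x * (x * y) * y := by rw [hxy.eq]
        _ = (x * x) * (y * y) := by group
        _ = 1 := by rw [px, py, one_mul]
    | inv x hx px => rw [← mul_inv_rev, px, inv_one]
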